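/- Fix an integer B ≥ 1, reals L and U with 3 ≤ L < U, positive reals a_1,…,a_B, and a budget C with B·L ≤ C ≤ B·U. For each q and each λ > 0, define n_q⋆(λ) = U if λ ≤ a_q/(U−1)²; n_q⋆(λ) = 1 + √(a_q/λ) if a_q/(U−1)² < λ < a_q/(L−1)²; and n_q⋆(λ) = L if λ ≥ a_q/(L−1)². Then there exists λ⋆ > 0 with Σ_{q=1}^B n_q⋆(λ⋆) = C, and the vector (n_q⋆(λ⋆))_{q=1}^B is the unique minimizer of Σ_{q=1}^B a_q/(n_q − 1) over all real vectors (n_1,…,n_B) with Σ_q n_q = C and L ≤ n_q ≤ U for every q. -/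

import Mathlib

open Finset

/-- The RLOO waterfilling allocation as a function of the multiplier `λ`. -/
noncomputable def rlooNstar (a L U lam : ℝ) : ℝ :=
  if lam ≤ a / (U - 1) ^ 2 then U
  else if lam < a / (L - 1) ^ 2 then 1 + Real.sqrt (a / lam)
  else L

lemma rloo_clamp (a L U lam : ℝ) (ha : 0 < a) (hL : 3 ≤ L) (hLU : L < U)
    (hlam : 0 < lam) :
    rlooNstar a L U lam = max L (min U (1 + Real.sqrt (a / lam))) := by
  have hU1 : (0:ℝ) < U - 1 := by linarith
  have hL1 : (0:ℝ) < L - 1 := by linarith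
  unfold rlooNstar
  split_ifs with h1 h2
  · -- lam ≤ a/(U-1)^2  ⇒ U-1 ≤ sqrt(a/lam)
    have h' : (U-1)^2 ≤ a / lam := by
      rw [le_div_iff₀ hlam]
      calc (U-1)^2 * lam ≤ (a / (U-1)^2) * (U-1)^2 := by nlinarith [sq_nonneg (U-1)]
        _ = a := by field_simp
    have hs : U - 1 ≤ Real.sqrt (a / lam) := by
      have := Real.sqrt_le_sqrt h'
      rwa [Real.sqrt_sq hU1.le] at this
    rw [min_eq_left (by linarith), max_eq_right hLU.le]
  · -- interior
    push_neg at h1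
    have h1' : a / lam < (U-1)^2 := by
      rw [div_lt_iff₀ hlam]
      have := (div_lt_iff₀ (by positivity : (0:ℝ) < (U-1)^2)).mp h1
      linarith
    have h2' : (L-1)^2 < a / lam := by
      rw [lt_div_iff₀ hlam]
      have := (lt_div_iff₀ (by positivity : (0:ℝ) < (L-1)^2)).mp h2
      linarith
    have hsU : Real.sqrt (a / lam) < U - 1 := by
      have := Real.sqrt_lt_sqrt (by positivity) h1'
      rwa [Real.sqrt_sq hU1.le] at this
    have hsL : L - 1 < Real.sqrt (a / lam) := by
      have := Real.sqrt_lt_sqrt (by positivity) h2'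
      rwa [Real.sqrt_sq hL1.le] at this
    rw [min_eq_right (by linarith), max_eq_right (by linarith)]
  · -- lam ≥ a/(L-1)^2 ⇒ sqrt ≤ L-1
    push_neg at h1 h2
    have h' : a / lam ≤ (L-1)^2 := by
      rw [div_le_iff₀ hlam]
      have := (div_le_iff₀ (by positivity : (0:ℝ) < (L-1)^2)).mp h2
      linarith
    have hs : Real.sqrt (a / lam) ≤ L - 1 := by
      have := Real.sqrt_le_sqrt h'
      rwa [Real.sqrt_sq hL1.le] at this
    rw [min_eq_right (by linarith), max_eq_left (by linarith)]

lemma rloo_mem (a L U lam : ℝ) (ha : 0 < a) (hL : 3 ≤ L) (hLU : L < U)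
    (hlam : 0 < lam) :
    L ≤ rlooNstar a L U lam ∧ rlooNstar a L U lam ≤ U := by
  rw [rloo_clamp a L U lam ha hL hLU hlam]
  refine ⟨le_max_left _ _, ?_⟩
  exact max_le hLU.le (min_le_left _ _)

lemma rloo_key (a L U lam m : ℝ) (ha : 0 < a) (hL : 3 ≤ L) (hLU : L < U)
    (hlam : 0 < lam) (hmL : L ≤ m) (hmU : m ≤ U) :
    a / (rlooNstar a L U lam - 1) + lam * rlooNstar a L U lam
      ≤ a / (m - 1) + lam * m ∧
    (m ≠ rlooNstar a L U lam →
      a / (rlooNstar a L U lam - 1) + lam * rlooNstar a L U lam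
        < a / (m - 1) + lam * m) := by
  have hm1 : (0:ℝ) < m - 1 := by linarith
  have hU1 : (0:ℝ) < U - 1 := by linarith
  have hL1 : (0:ℝ) < L - 1 := by linarith
  unfold rlooNstar
  split_ifs with h1 h2
  · -- n = U
    have hla : lam * (U-1)^2 ≤ a := by
      have := (le_div_iff₀ (by positivity : (0:ℝ) < (U-1)^2)).mp h1
      linarith
    have key : a / (m-1) + lam * m - (a / (U-1) + lam * U)
        = (U - m) * (a - lam * (m-1) * (U-1)) / ((m-1) * (U-1)) := by
      field_simp
      ring
    have hfac : lam * (U-1) * (U - m) ≤ a - lam * (m-1) * (U-1) := by nlinarith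
    constructor
    · have h0 : 0 ≤ (U - m) * (a - lam * (m-1) * (U-1)) / ((m-1) * (U-1)) := by
        apply div_nonneg _ (mul_pos hm1 hU1).le
        apply mul_nonneg (by linarith)
        nlinarith [mul_nonneg (mul_nonneg hlam.le hU1.le) (by linarith : (0:ℝ) ≤ U - m)]
      linarith
    · intro hne
      have hmU' : m < U := lt_of_le_of_ne hmU hne
      have h1' : 0 < a - lam * (m-1) * (U-1) := by nlinarith
      have h2' : 0 < (U - m) * (a - lam * (m-1) * (U-1)) / ((m-1) * (U-1)) :=
        div_pos (mul_pos (by linarith) h1') (mul_pos hm1 hU1)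
      linarith
  · -- interior
    push_neg at h1
    set s := Real.sqrt (a / lam) with hs
    have hs2 : s ^ 2 = a / lam := Real.sq_sqrt (by positivity)
    have has : a = lam * s ^ 2 := by
      field_simp at hs2; linarith
    have hsL : L - 1 < s := by
      have h2' : (L-1)^2 < a / lam := by
        rw [lt_div_iff₀ hlam]
        have := (lt_div_iff₀ (by positivity : (0:ℝ) < (L-1)^2)).mp h2
        linarith
      have := Real.sqrt_lt_sqrt (by positivity) h2'
      rwa [Real.sqrt_sq hL1.le] at this
    have hspos : 0 < s := by linarith
    have key : a / (m-1) + lam * m - (a / (1 + s - 1) + lam * (1 + s))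
        = lam * (m - 1 - s)^2 / (m-1) := by
      rw [has]
      have : (1:ℝ) + s - 1 = s := by ring
      rw [this]
      field_simp
      ring
    constructor
    · have : 0 ≤ lam * (m - 1 - s)^2 / (m-1) := by positivity
      linarith
    · intro hne
      have hne' : m - 1 - s ≠ 0 := by
        intro h; apply hne; linarith
      have : 0 < lam * (m - 1 - s)^2 / (m-1) := by
        have := sq_pos_of_ne_zero hne'
        positivity
      linarith
  · -- n = L
    push_neg at h1 h2
    have hla : a ≤ lam * (L-1)^2 := by
      have := (div_le_iff₀ (by positivity : (0:ℝ) < (L-1)^2)).mp h2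
      linarith
    have key : a / (m-1) + lam * m - (a / (L-1) + lam * L)
        = (m - L) * (lam * (m-1) * (L-1) - a) / ((m-1) * (L-1)) := by
      field_simp
      ring
    have hfac : lam * (L-1) * (m - L) ≤ lam * (m-1) * (L-1) - a := by nlinarith
    constructor
    · have h0 : 0 ≤ (m - L) * (lam * (m-1) * (L-1) - a) / ((m-1) * (L-1)) := by
        apply div_nonneg _ (mul_pos hm1 hL1).le
        apply mul_nonneg (by linarith)
        nlinarith [mul_nonneg (mul_nonneg hlam.le hL1.le) (by linarith : (0:ℝ) ≤ m - L)]
      linarith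
    · intro hne
      have hmL' : L < m := lt_of_le_of_ne hmL (Ne.symm hne)
      have h1' : 0 < lam * (m-1) * (L-1) - a := by nlinarith
      have h2' : 0 < (m - L) * (lam * (m-1) * (L-1) - a) / ((m-1) * (L-1)) :=
        div_pos (mul_pos (by linarith) h1') (mul_pos hm1 hL1)
      linarith

/-- **Continuous allocation for RLOO** (Theorem 5.2): there is a multiplier `λ⋆ > 0`
at which the waterfilling solution meets the budget and is the unique minimizer of
the total variance. -/
theorem rloo_continuous_allocation (B : ℕ) (hB : 1 ≤ B) (L U : ℝ)
    (hL : 3 ≤ L) (hLU : L < U)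
    (a : Fin B → ℝ) (ha : ∀ q, 0 < a q) (C : ℝ)
    (hC1 : (B : ℝ) * L ≤ C) (hC2 : C ≤ (B : ℝ) * U) :
    ∃ lamStar : ℝ, 0 < lamStar ∧ (∑ q, rlooNstar (a q) L U lamStar) = C ∧
      (∀ m : Fin B → ℝ, (∑ q, m q) = C → (∀ q, L ≤ m q ∧ m q ≤ U) →
        (∑ q, a q / (rlooNstar (a q) L U lamStar - 1)) ≤ ∑ q, a q / (m q - 1)) ∧
      (∀ m : Fin B → ℝ, (∑ q, m q) = C → (∀ q, L ≤ m q ∧ m q ≤ U) →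
        m ≠ (fun q => rlooNstar (a q) L U lamStar) →
        (∑ q, a q / (rlooNstar (a q) L U lamStar - 1)) < ∑ q, a q / (m q - 1)) := by
  have hne : (univ : Finset (Fin B)).Nonempty := ⟨⟨0, hB⟩, mem_univ _⟩
  have hU1 : (0:ℝ) < U - 1 := by linarith
  have hL1 : (0:ℝ) < L - 1 := by linarith
  set lo := univ.inf' hne (fun q => a q / (U - 1) ^ 2) with hlo_def
  set hi := univ.sup' hne (fun q => a q / (L - 1) ^ 2) with hhi_def
  have hlo_pos : 0 < lo := by
    rw [hlo_def, Finset.lt_inf'_iff]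
    intro q _; exact div_pos (ha q) (by positivity)
  have hfrac : ∀ q : Fin B, a q / (U - 1) ^ 2 < a q / (L - 1) ^ 2 := by
    intro q
    exact div_lt_div_of_pos_left (ha q) (by positivity) (by nlinarith)
  have hlohi : lo ≤ hi := by
    have h1 : lo ≤ a ⟨0, hB⟩ / (U - 1) ^ 2 := inf'_le _ (mem_univ _)
    have h2 : a ⟨0, hB⟩ / (L - 1) ^ 2 ≤ hi := le_sup' (fun q => a q / (L - 1) ^ 2) (mem_univ _)
    have := hfrac ⟨0, hB⟩
    linarith
  set f : ℝ → ℝ := fun lam => ∑ q, rlooNstar (a q) L U lam with hf_def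
  have hfcont : ContinuousOn f (Set.Icc lo hi) := by
    apply continuousOn_finset_sum
    intro q _
    have hg : ContinuousOn (fun lam => max L (min U (1 + Real.sqrt (a q / lam))))
        (Set.Icc lo hi) := by
      have hg' : ContinuousOn (fun lam => L ⊔ (U ⊓ (1 + Real.sqrt (a q / lam))))
          (Set.Icc lo hi) :=
        continuousOn_const.sup (continuousOn_const.inf (continuousOn_const.add
          (ContinuousOn.sqrt (continuousOn_const.div continuousOn_id
            (fun x hx => ne_of_gt (lt_of_lt_of_le hlo_pos hx.1))))))
      exact hg'
    apply hg.congr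
    intro x hx
    exact rloo_clamp (a q) L U x (ha q) hL hLU (lt_of_lt_of_le hlo_pos hx.1)
  have hflo : f lo = (B : ℝ) * U := by
    have h : ∀ q : Fin B, rlooNstar (a q) L U lo = U := by
      intro q
      unfold rlooNstar
      rw [if_pos (inf'_le _ (mem_univ q))]
    simp [hf_def, h, Finset.sum_const, Finset.card_univ, nsmul_eq_mul]
  have hfhi : f hi = (B : ℝ) * L := by
    have h : ∀ q : Fin B, rlooNstar (a q) L U hi = L := by
      intro q
      have hs : a q / (L - 1) ^ 2 ≤ hi := le_sup' (fun q => a q / (L - 1) ^ 2) (mem_univ q)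
      unfold rlooNstar
      rw [if_neg (by push_neg; exact lt_of_lt_of_le (hfrac q) hs), if_neg (by push_neg; exact hs)]
    simp [hf_def, h, Finset.sum_const, Finset.card_univ, nsmul_eq_mul]
  have hCmem : C ∈ Set.Icc (f hi) (f lo) := by
    rw [hflo, hfhi]; exact ⟨hC1, hC2⟩
  obtain ⟨lam, hlam_mem, hlam_eq⟩ := intermediate_value_Icc' hlohi hfcont hCmem
  have hpos : 0 < lam := lt_of_lt_of_le hlo_pos hlam_mem.1
  have hsum_n : (∑ q, rlooNstar (a q) L U lam) = C := hlam_eq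
  have hsplit : ∀ (g : Fin B → ℝ), ∑ q, (a q / (g q - 1) + lam * g q)
      = (∑ q, a q / (g q - 1)) + lam * ∑ q, g q := by
    intro g; rw [Finset.sum_add_distrib, Finset.mul_sum]
  refine ⟨lam, hpos, hsum_n, ?_, ?_⟩
  · intro m hmsum hmbd
    have h1 : ∑ q, (a q / (rlooNstar (a q) L U lam - 1) + lam * rlooNstar (a q) L U lam)
        ≤ ∑ q, (a q / (m q - 1) + lam * m q) :=
      Finset.sum_le_sum fun q _ =>
        (rloo_key (a q) L U lam (m q) (ha q) hL hLU hpos (hmbd q).1 (hmbd q).2).1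
    rw [hsplit, hsplit, hmsum, hsum_n] at h1
    linarith
  · intro m hmsum hmbd hmne
    obtain ⟨q0, hq0⟩ := Function.ne_iff.mp hmne
    have h1 : ∑ q, (a q / (rlooNstar (a q) L U lam - 1) + lam * rlooNstar (a q) L U lam)
        < ∑ q, (a q / (m q - 1) + lam * m q) := by
      apply Finset.sum_lt_sum
      · intro q _
        exact (rloo_key (a q) L U lam (m q) (ha q) hL hLU hpos (hmbd q).1 (hmbd q).2).1
      · exact ⟨q0, mem_univ q0,
          (rloo_key (a q0) L U lam (m q0) (ha q0) hL hLU hpos (hmbd q0).1 (hmbd q0).2).2 hq0⟩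
    rw [hsplit, hsplit, hmsum, hsum_n] at h1
    linarith
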